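/- arXiv:2009.11096 — 10 statements merged into one kernel-verified Lean document; each statement's English description precedes it below -/
import Mathlib

section
/- Let (g,[·,·]_g) be a Lie algebra over a field K, ρ: g → gl(V) a representation of g on a K-vector space V, and T: V → g an embedding tensor, i.e. [Tu,Tv]_g = T(ρ(Tu)v) for all u,v ∈ V. Then the bilinear operation [u,v]_T := ρ(Tu)v is a Leibniz algebra structure on V, i.e. [u,[v,w]_T]_T = [[u,v]_T,w]_T + [v,[u,w]_T]_T for all u,v,w ∈ V. -/
attribute [local instance 100] LieRing.ofAssociativeRing

/-- An embedding tensor `T` on a LieRep pair `(g, V)` induces a (left) Leibniz algebra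
structure `[u,v]_T := ρ(Tu)v` on `V`. -/
theorem embedding_tensor_induces_leibniz
    (K : Type*) [Field K] (g V : Type*) [LieRing g] [LieAlgebra K g]
    [AddCommGroup V] [Module K V]
    (ρ : g →ₗ⁅K⁆ Module.End K V) (T : V →ₗ[K] g)
    (hT : ∀ u v : V, ⁅T u, T v⁆ = T (ρ (T u) v)) :
    ∀ u v w : V,
      ρ (T u) (ρ (T v) w) = ρ (T (ρ (T u) v)) w + ρ (T v) (ρ (T u) w) := by
  intro u v w
  have : ρ (T (ρ (T u) v)) w = ρ (T u) (ρ (T v) w) - ρ (T v) (ρ (T u) w) := by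
    rw [← hT u v, ρ.map_lie]; rfl
  rw [this]; abel
end

section
/- Let 𝔗: W → 𝔥 be a linear map between vector spaces over a field K. Define End(W→𝔥) = {(A₀,A₁) ∈ gl(𝔥) × gl(W) : A₀∘𝔗 = 𝔗∘A₁}. Then: (1) End(W→𝔥) is a Lie subalgebra of gl(𝔥) × gl(W) with the componentwise commutator bracket; (2) ρ(A₀,A₁)(Φ) := A₁∘Φ − Φ∘A₀ defines a representation of End(W→𝔥) on Hom(𝔥,W); (3) the map 𝔗̄: Hom(𝔥,W) → End(W→𝔥), 𝔗̄(Φ) = (𝔗∘Φ, Φ∘𝔗), is well defined and is an embedding tensor: [𝔗̄(Φ), 𝔗̄(Ψ)] = 𝔗̄(ρ(𝔗̄(Φ))Ψ) for all Φ,Ψ ∈ Hom(𝔥,W). -/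
/-- For a 2-term complex `𝔗 : W → 𝔥`: the endomorphisms of the complex form a Lie
subalgebra of `gl(𝔥) × gl(W)`, they represent on `Hom(𝔥, W)` via
`ρ(A₀,A₁)(Φ) = A₁∘Φ − Φ∘A₀`, and `𝔗̄(Φ) = (𝔗∘Φ, Φ∘𝔗)` is an embedding tensor. -/
theorem twoTermComplex_endomorphisms_lieLeibniz_triple
    (K W H : Type*) [Field K] [AddCommGroup W] [Module K W]
    [AddCommGroup H] [Module K H] (𝔗 : W →ₗ[K] H) :
    let E : Set (Module.End K H × Module.End K W) := {p | p.1 ∘ₗ 𝔗 = 𝔗 ∘ₗ p.2}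
    let ρ : (Module.End K H × Module.End K W) → (H →ₗ[K] W) → (H →ₗ[K] W) :=
      fun A Φ => A.2 ∘ₗ Φ - Φ ∘ₗ A.1
    let Tbar : (H →ₗ[K] W) → Module.End K H × Module.End K W :=
      fun Φ => (𝔗 ∘ₗ Φ, Φ ∘ₗ 𝔗)
    -- (1) `E` is a Lie subalgebra of `gl(𝔥) × gl(W)`
    (((0 : Module.End K H × Module.End K W) ∈ E) ∧
     (∀ p q, p ∈ E → q ∈ E → p + q ∈ E) ∧
     (∀ (c : K) p, p ∈ E → c • p ∈ E) ∧
     (∀ p q, p ∈ E → q ∈ E → (⁅p.1, q.1⁆, ⁅p.2, q.2⁆) ∈ E)) ∧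
    -- (2) `ρ` is a representation of `E` on `Hom(𝔥, W)`
    (∀ p q, p ∈ E → q ∈ E → ∀ Φ : H →ₗ[K] W,
      ρ (⁅p.1, q.1⁆, ⁅p.2, q.2⁆) Φ = ρ p (ρ q Φ) - ρ q (ρ p Φ)) ∧
    -- (3) `𝔗̄` is well defined and an embedding tensor
    ((∀ Φ : H →ₗ[K] W, Tbar Φ ∈ E) ∧
     (∀ Φ Ψ : H →ₗ[K] W,
       (⁅(Tbar Φ).1, (Tbar Ψ).1⁆, ⁅(Tbar Φ).2, (Tbar Ψ).2⁆) = Tbar (ρ (Tbar Φ) Ψ))) := by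
  intro E ρ Tbar
  refine ⟨⟨?_, ?_, ?_, ?_⟩, ?_, ?_, ?_⟩
  · simp [E]
  · intro p q hp hq
    simp only [E, Set.mem_setOf_eq] at *
    simp [LinearMap.add_comp, LinearMap.comp_add, hp, hq]
  · intro c p hp
    simp only [E, Set.mem_setOf_eq] at *
    simp [LinearMap.smul_comp, LinearMap.comp_smul, hp]
  · intro p q hp hq
    simp only [E, Set.mem_setOf_eq] at *
    have hp' : ∀ w, p.1 (𝔗 w) = 𝔗 (p.2 w) := fun w => LinearMap.congr_fun hp w
    have hq' : ∀ w, q.1 (𝔗 w) = 𝔗 (q.2 w) := fun w => LinearMap.congr_fun hq w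
    ext w
    simp [LieRing.of_associative_ring_bracket, Module.End.mul_apply, hq' w, hp' (q.2 w), hp' w, hq' (p.2 w)]
  · intro p q hp hq Φ
    ext h
    simp [ρ, LieRing.of_associative_ring_bracket, Module.End.mul_apply, map_sub]
    abel
  · intro Φ
    simp [E, Tbar, LinearMap.comp_assoc]
  · intro Φ Ψ
    simp only [Tbar, ρ]
    ext h <;> simp [LieRing.of_associative_ring_bracket, Module.End.mul_apply, map_sub]
end

section
/- Let H₃(ℂ) be the 3-dimensional Heisenberg Lie algebra over ℂ with basis e₁,e₂,e₃ and brackets [e₁,e₂] = e₃, [e₁,e₃] = 0, [e₂,e₃] = 0. A linear map T: H₃(ℂ) → H₃(ℂ), given in this basis by the matrix (r_{ij})_{1≤i,j≤3}, is an embedding tensor with respect to the adjoint representation (i.e. [Te_i, Te_j] = T[Te_i, e_j] for all i,j) if and only if r₁₃ = r₂₃ = 0 and either (r₃₃ = 0 and r₁₁r₂₂ = r₁₂r₂₁) or (r₃₃ ≠ 0 and r₁₂ = r₂₁ = 0 and r₁₁r₂₂ = r₂₂r₃₃ = r₁₁r₃₃). -/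
/-- Classification of embedding tensors on the 3-dimensional complex Heisenberg Lie
algebra with respect to the adjoint representation: the linear map `T` with matrix
`(r i j)` (in the basis `e₁, e₂, e₃` with `[e₁,e₂] = e₃`) is an embedding tensor iff
`r₁₃ = r₂₃ = 0` and either (`r₃₃ = 0` and `r₁₁r₂₂ = r₁₂r₂₁`) or (`r₃₃ ≠ 0`,
`r₁₂ = r₂₁ = 0` and `r₁₁r₂₂ = r₂₂r₃₃ = r₁₁r₃₃`). -/
theorem heisenberg_embedding_tensor_classification (r : Fin 3 → Fin 3 → ℂ) :
    let br : ℂ × ℂ × ℂ → ℂ × ℂ × ℂ → ℂ × ℂ × ℂ :=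
      fun x y => (0, 0, x.1 * y.2.1 - x.2.1 * y.1)
    let T : ℂ × ℂ × ℂ → ℂ × ℂ × ℂ :=
      fun x => (r 0 0 * x.1 + r 0 1 * x.2.1 + r 0 2 * x.2.2,
                r 1 0 * x.1 + r 1 1 * x.2.1 + r 1 2 * x.2.2,
                r 2 0 * x.1 + r 2 1 * x.2.1 + r 2 2 * x.2.2)
    (∀ u v : ℂ × ℂ × ℂ, br (T u) (T v) = T (br (T u) v)) ↔
      (r 0 2 = 0 ∧ r 1 2 = 0 ∧
        ((r 2 2 = 0 ∧ r 0 0 * r 1 1 = r 0 1 * r 1 0) ∨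
         (r 2 2 ≠ 0 ∧ r 0 1 = 0 ∧ r 1 0 = 0 ∧
          r 0 0 * r 1 1 = r 1 1 * r 2 2 ∧ r 1 1 * r 2 2 = r 0 0 * r 2 2))) := by
  intro br T
  constructor
  · intro h
    have h1 := h (0,0,1) (0,1,0)
    have h2 := h (0,0,1) (1,0,0)
    have h3 := h (1,0,0) (0,1,0)
    have h4 := h (0,1,0) (1,0,0)
    have h5 := h (1,0,0) (1,0,0)
    have h6 := h (0,1,0) (0,1,0)
    simp only [br, T, Prod.mk.injEq, mul_one, mul_zero, zero_mul, one_mul,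
      add_zero, zero_add, sub_zero, zero_sub] at h1 h2 h3 h4 h5 h6
    have e02 : r 0 2 = 0 := mul_self_eq_zero.mp h1.1.symm
    have e12 : r 1 2 = 0 := mul_self_eq_zero.mp (by linear_combination h2.2.1)
    refine ⟨e02, e12, ?_⟩
    by_cases hz : r 2 2 = 0
    · exact Or.inl ⟨hz, by linear_combination h3.2.2 + r 0 0 * hz⟩
    · have e01 : r 0 1 = 0 := by
        have hh : r 2 2 * r 0 1 = 0 := by linear_combination -h6.2.2
        exact (mul_eq_zero.mp hh).resolve_left hz
      have e10 : r 1 0 = 0 := by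
        have hh : r 2 2 * r 1 0 = 0 := by linear_combination h5.2.2
        exact (mul_eq_zero.mp hh).resolve_left hz
      exact Or.inr ⟨hz, e01, e10,
        by linear_combination -h4.2.2 + r 1 0 * e01,
        by linear_combination h3.2.2 + h4.2.2⟩
  · rintro ⟨e02, e12, (⟨hz, hdet⟩ | ⟨hz, e01, e10, hA, hB⟩)⟩ u v
    · simp only [br, T, Prod.mk.injEq, e02, e12, hz, zero_mul, mul_zero,
        add_zero, zero_add]
      refine ⟨trivial, trivial, ?_⟩
      linear_combination (u.1 * v.2.1 - u.2.1 * v.1) * hdet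
    · simp only [br, T, Prod.mk.injEq, e02, e12, e01, e10, zero_mul, mul_zero,
        add_zero, zero_add]
      refine ⟨trivial, trivial, ?_⟩
      linear_combination u.1 * v.2.1 * (hA + hB) - u.2.1 * v.1 * hA
end

section
/- Let (g,[·,·]_g) be a Lie algebra over a field K, ρ: g → gl(V) a representation, and T: V → g an embedding tensor. Define ρ^L, ρ^R: V → gl(g) by ρ^L(u)y = [Tu, y]_g and ρ^R(v)x = [x, Tv]_g − T(ρ(x)v). Then (g; ρ^L, ρ^R) is a representation of the Leibniz algebra (V, [·,·]_T), where [u,v]_T = ρ(Tu)v; that is, for all u,v ∈ V: ρ^L([u,v]_T) = ρ^L(u)∘ρ^L(v) − ρ^L(v)∘ρ^L(u), ρ^R([u,v]_T) = ρ^L(u)∘ρ^R(v) − ρ^R(v)∘ρ^L(u), and ρ^R(v)∘ρ^L(u) = −ρ^R(v)∘ρ^R(u). -/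
attribute [local instance 100] LieRing.ofAssociativeRing

/-- Given an embedding tensor `T` on a LieRep pair `(g, V)`, the maps
`ρᴸ(u)y = [Tu, y]` and `ρᴿ(v)x = [x, Tv] − T(ρ(x)v)` make `g` a representation of
the induced Leibniz algebra `(V, [·,·]_T)`. -/
theorem embedding_tensor_leibniz_representation
    (K g V : Type*) [Field K] [LieRing g] [LieAlgebra K g]
    [AddCommGroup V] [Module K V]
    (ρ : g →ₗ⁅K⁆ Module.End K V) (T : V →ₗ[K] g)
    (hT : ∀ u v : V, ⁅T u, T v⁆ = T (ρ (T u) v)) :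
    let ρL : V → g → g := fun u y => ⁅T u, y⁆
    let ρR : V → g → g := fun v x => ⁅x, T v⁆ - T (ρ x v)
    let br : V → V → V := fun u v => ρ (T u) v
    (∀ (u v : V) (x : g), ρL (br u v) x = ρL u (ρL v x) - ρL v (ρL u x)) ∧
    (∀ (u v : V) (x : g), ρR (br u v) x = ρL u (ρR v x) - ρR v (ρL u x)) ∧
    (∀ (u v : V) (x : g), ρR v (ρL u x) = -(ρR v (ρR u x))) := by
  intro ρL ρR br
  have key : ∀ (a b : g) (v : V), ρ ⁅a, b⁆ v = ρ a (ρ b v) - ρ b (ρ a v) := by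
    intro a b v
    rw [LieHom.map_lie, Ring.lie_def, LinearMap.sub_apply, Module.End.mul_apply,
      Module.End.mul_apply]
  refine ⟨?_, ?_, ?_⟩
  · intro u v x
    simp only [ρL, br, ← hT, lie_lie]
  · intro u v x
    show ⁅x, T (ρ (T u) v)⁆ - T (ρ x (ρ (T u) v)) =
      ⁅T u, ⁅x, T v⁆ - T (ρ x v)⁆ - (⁅⁅T u, x⁆, T v⁆ - T (ρ ⁅T u, x⁆ v))
    rw [← hT, key, lie_sub, leibniz_lie x (T u) (T v), hT, map_sub,
      ← lie_skew (T u) x, neg_lie]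
    abel
  · intro u v x
    show ⁅⁅T u, x⁆, T v⁆ - T (ρ ⁅T u, x⁆ v) =
      -(⁅⁅x, T u⁆ - T (ρ x u), T v⁆ - T (ρ (⁅x, T u⁆ - T (ρ x u)) v))
    rw [sub_lie, map_sub ρ, LinearMap.sub_apply, key, key, hT, ← lie_skew (T u) x, neg_lie]
    simp only [map_sub]
    abel
end

section
/- Let (g,[·,·]_g) be a Lie algebra over a field K, ρ: g → gl(V) a representation, and T: V → g an embedding tensor. For a k-multilinear map θ: V^k → g define Φ(θ): V^{k+1} → V by Φ(θ)(u₁,…,u_k,u_{k+1}) = −ρ(θ(u₁,…,u_k))u_{k+1}, define ∂_T θ: V^{k+1} → g by ∂_T θ(u₁,…,u_{k+1}) = Σ_{i=1}^{k}(−1)^{i+1}[Tu_i, θ(u₁,…,û_i,…,u_{k+1})]_g + (−1)^{k+1}[θ(u₁,…,u_k), Tu_{k+1}]_g + (−1)^k T(ρ(θ(u₁,…,u_k))u_{k+1}) + Σ_{1≤i<j≤k+1}(−1)^i θ(u₁,…,û_i,…,u_{j−1}, ρ(Tu_i)u_j, u_{j+1},…,u_{k+1}), and let ∂ be the Loday–Pirashvili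 coboundary of the Leibniz algebra (V,[·,·]_T) (where [u,v]_T = ρ(Tu)v) with coefficients in its regular representation: for f: V^{k+1} → V, (∂f)(u₁,…,u_{k+2}) = Σ_{i=1}^{k+1}(−1)^{i+1}[u_i, f(u₁,…,û_i,…,u_{k+2})]_T + (−1)^{k+2}[f(u₁,…,u_{k+1}), u_{k+2}]_T + Σ_{1≤i<j≤k+2}(−1)^i f(u₁,…,û_i,…,u_{j−1}, [u_i,u_j]_T, u_{j+1},…,u_{k+2}). Then for every k-multilinear θ: V^k → g one has Φ(∂_T θ) = ∂(Φ(θ)). -/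
attribute [local instance 100] LieRing.ofAssociativeRing

namespace EmbeddingTensorCohomology

variable (K : Type*) [Field K] {g V : Type*} [LieRing g] [LieAlgebra K g]
  [AddCommGroup V] [Module K V]

/-- The coboundary operator `∂_T` of an embedding tensor `T`, on `k`-cochains
`θ : V^k → g`. -/
def dT (ρ : g →ₗ⁅K⁆ Module.End K V) (T : V →ₗ[K] g) {k : ℕ}
    (θ : (Fin k → V) → g) : (Fin (k + 1) → V) → g := fun u =>
  (∑ i : Fin k, ((-1 : K) ^ (i : ℕ)) •
      ⁅T (u i.castSucc), θ (fun l => u (i.castSucc.succAbove l))⁆)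
    + ((-1 : K) ^ (k + 1)) • ⁅θ (fun l => u l.castSucc), T (u (Fin.last k))⁆
    + ((-1 : K) ^ k) • T (ρ (θ (fun l => u l.castSucc)) (u (Fin.last k)))
    + ∑ i : Fin (k + 1), ∑ j : Fin (k + 1),
        if i < j then
          ((-1 : K) ^ ((i : ℕ) + 1)) •
            θ (fun l => Function.update u j (ρ (T (u i)) (u j)) (i.succAbove l))
        else 0

/-- The Loday–Pirashvili coboundary of the Leibniz algebra `(V, [·,·]_T)`
(`[u,v]_T = ρ(Tu)v`) with coefficients in the regular representation. -/
def lp (ρ : g →ₗ⁅K⁆ Module.End K V) (T : V →ₗ[K] g) {m : ℕ}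
    (f : (Fin m → V) → V) : (Fin (m + 1) → V) → V := fun u =>
  (∑ i : Fin m, ((-1 : K) ^ (i : ℕ)) •
      ρ (T (u i.castSucc)) (f (fun l => u (i.castSucc.succAbove l))))
    + ((-1 : K) ^ (m + 1)) • ρ (T (f (fun l => u l.castSucc))) (u (Fin.last m))
    + ∑ i : Fin (m + 1), ∑ j : Fin (m + 1),
        if i < j then
          ((-1 : K) ^ ((i : ℕ) + 1)) •
            f (fun l => Function.update u j (ρ (T (u i)) (u j)) (i.succAbove l))
        else 0

/-- The map `Φ`, sending a `k`-cochain `θ : V^k → g` to the `(k+1)`-cochain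
`Φ(θ)(u₁,…,u_{k+1}) = −ρ(θ(u₁,…,u_k))u_{k+1}`. -/
def Phi (ρ : g →ₗ⁅K⁆ Module.End K V) {k : ℕ}
    (θ : (Fin k → V) → g) : (Fin (k + 1) → V) → V := fun u =>
  -(ρ (θ (fun l => u l.castSucc)) (u (Fin.last k)))

end EmbeddingTensorCohomology

open EmbeddingTensorCohomology in
/-- `Φ` is a cochain map from the complex of the embedding tensor `T` to the
Loday–Pirashvili complex of the induced Leibniz algebra `(V, [·,·]_T)` with regular
coefficients: `Φ(∂_T θ) = ∂(Φ(θ))` for every `k`-multilinear `θ : V^k → g`. -/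
theorem Phi_cochain_map
    (K : Type*) [Field K] (g V : Type*) [LieRing g] [LieAlgebra K g]
    [AddCommGroup V] [Module K V]
    (ρ : g →ₗ⁅K⁆ Module.End K V) (T : V →ₗ[K] g)
    (hT : ∀ u v : V, ⁅T u, T v⁆ = T (ρ (T u) v))
    (k : ℕ) (hk : 1 ≤ k) (θ : MultilinearMap K (fun _ : Fin k => V) g) :
    Phi K ρ (dT K ρ T ⇑θ) = lp K ρ T (Phi K ρ ⇑θ) := by
  funext u
  -- applied-level linearity of ρ
  have hadd : ∀ (a b : g) (z : V), ρ (a + b) z = ρ a z + ρ b z := by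
    intro a b z; rw [map_add]; rfl
  have hsum : ∀ {α : Type} (s : Finset α) (f : α → g) (z : V),
      ρ (∑ i ∈ s, f i) z = ∑ i ∈ s, ρ (f i) z := by
    intro α s f z
    rw [← LieHom.coe_toLinearMap, map_sum, LinearMap.sum_apply]
  have hsmul : ∀ (c : K) (a : g) (z : V), ρ (c • a) z = c • ρ a z := by
    intro c a z; rw [map_smul]; rfl
  have hneg : ∀ (a : g) (z : V), ρ (-a) z = -(ρ a z) := by
    intro a z; rw [← LieHom.coe_toLinearMap, map_neg]; rfl
  have h1 : ∀ (x y : g) (z : V), ρ ⁅x, y⁆ z = ρ x (ρ y z) - ρ y (ρ x z) := by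
    intro x y z
    rw [LieHom.map_lie, Ring.lie_def]
    simp [Module.End.mul_apply]
  have hite : ∀ {n : ℕ} (i j : Fin n) (x : g) (z : V),
      ρ (if i < j then x else 0) z = if i < j then ρ x z else 0 := by
    intro n i j x z; split <;> simp
  have hite2 : ∀ {n : ℕ} (i j : Fin n) (c : V),
      (if i < j then -c else 0) = -(if i < j then c else 0) := by
    intro n i j c; split <;> simp
  -- index bookkeeping helpers
  have hlast : ∀ (p : Fin (k+1)), p.castSucc.succAbove (Fin.last k) = Fin.last (k+1) := by
    intro p
    rw [Fin.succAbove_castSucc_of_le _ _ (Fin.le_last p), Fin.succ_last]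
  have hne : ∀ (j : Fin (k+1)), j.castSucc ≠ Fin.last (k+1) :=
    fun j => (Fin.castSucc_lt_last j).ne
  have hupdate : ∀ (j : Fin (k+1)) (x : V) (m : Fin (k+1)),
      Function.update (fun l : Fin (k+1) => u l.castSucc) j x m
        = Function.update u j.castSucc x m.castSucc := by
    intro j x m
    rcases eq_or_ne m j with rfl | h
    · simp
    · rw [Function.update_of_ne h, Function.update_of_ne (by simpa using h)]
  have h2a : ∀ (j : Fin (k+1)) (X : V) (x : Fin (k+1)) (l : Fin k),
      Function.update u j.castSucc X (x.castSucc.succAbove l.castSucc)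
        = Function.update u j.castSucc X ((x.succAbove l).castSucc) := by
    intros; rw [Fin.castSucc_succAbove_castSucc]
  have h3a : ∀ (j : Fin (k+1)) (X : V) (x : Fin (k+1)),
      Function.update u j.castSucc X (x.castSucc.succAbove (Fin.last k))
        = u (Fin.last (k+1)) := by
    intro j X x; rw [hlast, Function.update_of_ne (hne j).symm]
  have h2b : ∀ (X : V) (x : Fin (k+1)) (l : Fin k),
      Function.update u (Fin.last (k+1)) X (x.castSucc.succAbove l.castSucc)
        = u ((x.succAbove l).castSucc) := by
    intro X x l
    rw [Fin.castSucc_succAbove_castSucc, Function.update_of_ne (hne _)]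
  have h3b : ∀ (X : V) (x : Fin (k+1)),
      Function.update u (Fin.last (k+1)) X (x.castSucc.succAbove (Fin.last k)) = X := by
    intro X x; rw [hlast, Function.update_self]
  have hup2 : ∀ (j : Fin (k+1)) (x : V),
      Function.update u j.castSucc x (Fin.last (k+1)) = u (Fin.last (k+1)) := by
    intro j x; rw [Function.update_of_ne (hne j).symm]
  have hnl2 : ∀ (x : Fin k), ¬ (Fin.last k < x.castSucc) :=
    fun x => not_lt.2 (Fin.le_last _)
  have hnotlt : ∀ (j : Fin (k+2)), ¬ (Fin.last (k+1) < j) :=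
    fun j => not_lt.2 (Fin.le_last j)
  have hmn : ∀ (a : g) (z : V), ρ a (-z) = -(ρ a z) := fun a z => (ρ a).map_neg z
  have hTn : ∀ (z : V), T (-z) = -(T z) := fun z => T.map_neg z
  -- unfold and push linearity
  simp only [Phi, dT, EmbeddingTensorCohomology.lp, hadd, hsum, hsmul, hneg, hite, h1,
    hupdate, hlast, hmn, hTn, Fin.castSucc_succAbove_castSucc, Fin.succAbove_last,
    Fin.coe_castSucc, Fin.val_last, smul_sub, smul_neg, neg_neg]
  -- split the sums
  simp only [Fin.sum_univ_castSucc, Fin.castSucc_lt_castSucc_iff, Fin.castSucc_lt_last,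
    hnl2, hnotlt, Fin.lt_irrefl, lt_self_iff_false, if_true, if_false, ite_true, ite_false,
    Fin.coe_castSucc, Fin.val_last, Fin.castSucc_succAbove_castSucc, Fin.succAbove_last,
    h2a, h3a, h2b, h3b, Function.update_of_ne (hne _), hup2, hlast, hmn, hTn, Function.update_self, smul_sub, smul_neg,
    neg_neg, Finset.sum_const_zero, add_zero, zero_add]
  simp only [pow_succ, mul_neg_one, neg_smul, smul_neg, neg_neg, hite2,
    Finset.sum_add_distrib, Finset.sum_sub_distrib, Finset.sum_neg_distrib]
  abel
end

section
/- Let (g,[·,·]_g) be a Lie algebra over a field K, ρ: g → gl(V) a representation, T: V → g an embedding tensor, and let ω: g × g → g be an alternating bilinear map, ϱ: g × V → V a bilinear map, 𝒯: V → g a linear map. On g × g define the bracket [(x,a),(y,b)]_t = ([x,y]_g, [x,b]_g + [a,y]_g + ω(x,y)); on (g×g) × (V×V) define the action ρ_t(x,a)(u,w) = (ρ(x)u, ρ(x)w + ρ(a)u + ϱ(x,u)); define T_t: V×V → g×g by T_t(u,w) = (Tu, 𝒯u + Tw). Then ([·,·]_t is a Lie bracket on g×g, ρ_t is a representation of (g×g,[·,·]_t)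 on V×V, and T_t is an embedding tensor for it) if and only if the following three conditions hold: (i) ω is a Chevalley–Eilenberg 2-cocycle of g with adjoint coefficients, i.e. ω([x,y]_g,z) + ω([y,z]_g,x) + ω([z,x]_g,y) = [x,ω(y,z)]_g + [y,ω(z,x)]_g + [z,ω(x,y)]_g; (ii) ρ(ω(x,y))v + ϱ([x,y]_g,v) = ρ(x)ϱ(y,v) + ϱ(x,ρ(y)v) − ρ(y)ϱ(x,v) − ϱ(y,ρ(x)v) for all x,y ∈ g, v ∈ V; (iii) [𝒯u,Tv]_g + [Tu,𝒯v]_g + ω(Tu,Tv) = T(ρ(𝒯u)v + ϱ(Tu,v)) + 𝒯(ρ(Tu)v) for all u,v ∈ V. -/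
attribute [local instance 100] LieRing.ofAssociativeRing

/-- `(ω, ϱ, 𝒯)` generates an infinitesimal deformation of the Lie-Leibniz triple
`(g, V, T)` (encoded over `K[t]/(t²)` via pairs, `(x, a)` standing for `x + ta`) if
and only if `(ω, ϱ, 𝒯)` is a 2-cocycle, i.e. the three conditions (i)–(iii) hold. -/
theorem infinitesimal_deformation_iff_two_cocycle
    (K g V : Type*) [Field K] [LieRing g] [LieAlgebra K g]
    [AddCommGroup V] [Module K V]
    (ρ : g →ₗ⁅K⁆ Module.End K V) (T : V →ₗ[K] g)
    (hT : ∀ u v : V, ⁅T u, T v⁆ = T (ρ (T u) v))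
    (ω : g →ₗ[K] g →ₗ[K] g) (hω : ∀ x : g, ω x x = 0)
    (ϱ : g →ₗ[K] V →ₗ[K] V) (𝒯 : V →ₗ[K] g) :
    let brt : g × g → g × g → g × g :=
      fun p q => (⁅p.1, q.1⁆, ⁅p.1, q.2⁆ + ⁅p.2, q.1⁆ + ω p.1 q.1)
    let ρt : g × g → V × V → V × V :=
      fun p u => (ρ p.1 u.1, ρ p.1 u.2 + ρ p.2 u.1 + ϱ p.1 u.1)
    let Tt : V × V → g × g := fun u => (T u.1, 𝒯 u.1 + T u.2)
    -- `[·,·]_t` is a Lie bracket, `ρ_t` is a representation, `T_t` is an embedding tensor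
    ((∀ p : g × g, brt p p = 0) ∧
     (∀ p q r : g × g, brt p (brt q r) = brt (brt p q) r + brt q (brt p r)) ∧
     (∀ (p q : g × g) (u : V × V), ρt (brt p q) u = ρt p (ρt q u) - ρt q (ρt p u)) ∧
     (∀ u v : V × V, brt (Tt u) (Tt v) = Tt (ρt (Tt u) v)))
    ↔
    -- (i) ω is a Chevalley–Eilenberg 2-cocycle of g with adjoint coefficients
    ((∀ x y z : g, ω ⁅x, y⁆ z + ω ⁅y, z⁆ x + ω ⁅z, x⁆ y =
        ⁅x, ω y z⁆ + ⁅y, ω z x⁆ + ⁅z, ω x y⁆) ∧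
     -- (ii)
     (∀ (x y : g) (v : V), ρ (ω x y) v + ϱ ⁅x, y⁆ v =
        ρ x (ϱ y v) + ϱ x (ρ y v) - ρ y (ϱ x v) - ϱ y (ρ x v)) ∧
     -- (iii)
     (∀ u v : V, ⁅𝒯 u, T v⁆ + ⁅T u, 𝒯 v⁆ + ω (T u) (T v) =
        T (ρ (𝒯 u) v + ϱ (T u) v) + 𝒯 (ρ (T u) v))) := by
  intro brt ρt Tt
  -- skew-symmetry of ω
  have ωsk : ∀ x y : g, ω x y = -ω y x := by
    intro x y
    have h := hω (x + y)
    simp only [map_add, LinearMap.add_apply, hω] at h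
    linear_combination (norm := abel) h
  have eA : ∀ x y z : g, ω x ⁅y, z⁆ = -ω ⁅y, z⁆ x := fun x y z => ωsk _ _
  have eB : ∀ x y z : g, ⁅ω x y, z⁆ = -⁅z, ω x y⁆ := fun x y z =>
    (lie_skew (ω x y) z).symm
  have eC : ∀ x y z : g, ⁅y, ω x z⁆ = -⁅y, ω z x⁆ := by
    intro x y z; rw [ωsk x z, lie_neg]
  have eD : ∀ x y z : g, ω y ⁅x, z⁆ = ω ⁅z, x⁆ y := by
    intro x y z
    rw [ωsk y ⁅x, z⁆, ← lie_skew x z, map_neg, LinearMap.neg_apply, neg_neg]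
  have hcomm : ∀ (x y : g) (v : V), ρ ⁅x, y⁆ v = ρ x (ρ y v) - ρ y (ρ x v) := by
    intro x y v
    rw [LieHom.map_lie, Ring.lie_def, LinearMap.sub_apply, Module.End.mul_apply,
      Module.End.mul_apply]
  constructor
  · rintro ⟨-, hJ, hR, hE⟩
    refine ⟨?_, ?_, ?_⟩
    · intro x y z
      have h := congrArg Prod.snd (hJ (x, 0) (y, 0) (z, 0))
      simp only [brt, lie_zero, zero_lie, add_zero, zero_add, Prod.snd_add] at h
      linear_combination (norm := abel) -h + eA x y z - eB x y z - eC x y z - eD x y z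
    · intro x y v
      have h := congrArg Prod.snd (hR (x, 0) (y, 0) (v, 0))
      simp only [ρt, brt, lie_zero, zero_lie, add_zero, zero_add, map_zero,
        LinearMap.zero_apply, Prod.snd_sub] at h
      linear_combination (norm := abel) h
    · intro u v
      have h := congrArg Prod.snd (hE (u, 0) (v, 0))
      simp only [Tt, ρt, brt, map_zero, add_zero, zero_add, lie_zero, zero_lie,
        LinearMap.zero_apply] at h
      linear_combination (norm := abel) h
  · rintro ⟨h1, h2, h3⟩
    have key : ∀ x y z : g, ⁅x, ω y z⁆ + ω x ⁅y, z⁆ =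
        ⁅ω x y, z⁆ + ω ⁅x, y⁆ z + (⁅y, ω x z⁆ + ω y ⁅x, z⁆) := by
      intro x y z
      linear_combination (norm := abel) -(h1 x y z) + eA x y z - eB x y z -
        eC x y z - eD x y z
    refine ⟨?_, ?_, ?_, ?_⟩
    · intro p
      have h : ⁅p.1, p.2⁆ + ⁅p.2, p.1⁆ = 0 := by
        rw [← lie_skew p.1 p.2]; abel
      simp only [brt, lie_self, hω, add_zero, h, Prod.mk_eq_zero, and_self]
    · intro p q r
      simp only [brt, Prod.mk_add_mk, Prod.mk.injEq]
      constructor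
      · exact leibniz_lie _ _ _
      · simp only [lie_add, add_lie, lie_lie]
        linear_combination (norm := abel) key p.1 q.1 r.1
    · intro p q u
      simp only [ρt, brt, Prod.mk_sub_mk, Prod.mk.injEq]
      constructor
      · rw [hcomm]
      · simp only [map_add, LinearMap.add_apply, hcomm]
        linear_combination (norm := abel) h2 p.1 q.1 u.1
    · intro u v
      simp only [Tt, ρt, brt, Prod.mk.injEq]
      have h3' := h3 u.1 v.1
      simp only [map_add] at h3'
      constructor
      · exact hT u.1 v.1
      · simp only [lie_add, add_lie, map_add, LinearMap.add_apply]
        linear_combination (norm := abel) h3' + hT u.1 v.2 + hT u.2 v.1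
end

section
/- Let (g,[·,·]_g) be a Lie algebra over a field K, ρ: g → gl(V) a representation, T: V → g an embedding tensor, and let (ω,ϱ,𝒯) and (ω',ϱ',𝒯') both generate infinitesimal deformations of (g,V,T) (i.e. both satisfy the three 2-cocycle equations (i)–(iii) below). Suppose they are equivalent via N ∈ gl(g), S ∈ gl(V), x₀ ∈ g, meaning: in the pair-encoding over K[t]/(t²), φ(y,b) = (y, b + Ny + [x₀,y]_g) is a Lie algebra homomorphism from (g×g, [·,·]_{t,ω'}) to (g×g, [·,·]_{t,ω}), ψ(u,w) = (u, w + Su + ρ(x₀)u) intertwines the corresponding deformed representations, and T_t∘ψ = φ∘T'_t where T_t(u,w) = (Tu, 𝒯u + Tw) and T'_t(u,w) = (Tu, 𝒯'u + Tw). Then for all x,y ∈ g, u,v ∈ V: ω'(x,y) − ω(x,y) = [x,Ny]_g − [y,Nx]_g − N[x,y]_g; ϱ'(y,u) − ϱ(y,u) = ρ(Ny)u + ρ(y)Su − S(ρ(y)u); and 𝒯'u − 𝒯u = T(ρ(x₀)u) − [x₀,Tu]_g − N(Tu) + T(Su). -/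
attribute [local instance] LieRing.ofAssociativeRing

/-- If two infinitesimal deformations `(ω, ϱ, 𝒯)` and `(ω', ϱ', 𝒯')` of a
Lie-Leibniz triple `(g, V, T)` are equivalent via `(N, S, x₀)` (in the pair encoding
over `K[t]/(t²)`), then they differ by the coboundary of `(N, S, x₀)`. -/
theorem equivalent_deformations_differ_by_coboundary
    (K g V : Type*) [Field K] [LieRing g] [LieAlgebra K g]
    [AddCommGroup V] [Module K V]
    (ρ : g →ₗ⁅K⁆ Module.End K V) (T : V →ₗ[K] g)
    (hT : ∀ u v : V, ⁅T u, T v⁆ = T (ρ (T u) v))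
    (ω ω' : g →ₗ[K] g →ₗ[K] g) (hω : ∀ x : g, ω x x = 0) (hω' : ∀ x : g, ω' x x = 0)
    (ϱ ϱ' : g →ₗ[K] V →ₗ[K] V) (𝒯 𝒯' : V →ₗ[K] g)
    -- `(ω, ϱ, 𝒯)` is a 2-cocycle
    (hco1 : ∀ x y z : g, ω ⁅x, y⁆ z + ω ⁅y, z⁆ x + ω ⁅z, x⁆ y =
      ⁅x, ω y z⁆ + ⁅y, ω z x⁆ + ⁅z, ω x y⁆)
    (hco2 : ∀ (x y : g) (v : V), ρ (ω x y) v + ϱ ⁅x, y⁆ v =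
      ρ x (ϱ y v) + ϱ x (ρ y v) - ρ y (ϱ x v) - ϱ y (ρ x v))
    (hco3 : ∀ u v : V, ⁅𝒯 u, T v⁆ + ⁅T u, 𝒯 v⁆ + ω (T u) (T v) =
      T (ρ (𝒯 u) v + ϱ (T u) v) + 𝒯 (ρ (T u) v))
    -- `(ω', ϱ', 𝒯')` is a 2-cocycle
    (hco1' : ∀ x y z : g, ω' ⁅x, y⁆ z + ω' ⁅y, z⁆ x + ω' ⁅z, x⁆ y =
      ⁅x, ω' y z⁆ + ⁅y, ω' z x⁆ + ⁅z, ω' x y⁆)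
    (hco2' : ∀ (x y : g) (v : V), ρ (ω' x y) v + ϱ' ⁅x, y⁆ v =
      ρ x (ϱ' y v) + ϱ' x (ρ y v) - ρ y (ϱ' x v) - ϱ' y (ρ x v))
    (hco3' : ∀ u v : V, ⁅𝒯' u, T v⁆ + ⁅T u, 𝒯' v⁆ + ω' (T u) (T v) =
      T (ρ (𝒯' u) v + ϱ' (T u) v) + 𝒯' (ρ (T u) v))
    (N : g →ₗ[K] g) (S : V →ₗ[K] V) (x₀ : g) :
    let brt : g × g → g × g → g × g :=
      fun p q => (⁅p.1, q.1⁆, ⁅p.1, q.2⁆ + ⁅p.2, q.1⁆ + ω p.1 q.1)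
    let brt' : g × g → g × g → g × g :=
      fun p q => (⁅p.1, q.1⁆, ⁅p.1, q.2⁆ + ⁅p.2, q.1⁆ + ω' p.1 q.1)
    let ρt : g × g → V × V → V × V :=
      fun p u => (ρ p.1 u.1, ρ p.1 u.2 + ρ p.2 u.1 + ϱ p.1 u.1)
    let ρt' : g × g → V × V → V × V :=
      fun p u => (ρ p.1 u.1, ρ p.1 u.2 + ρ p.2 u.1 + ϱ' p.1 u.1)
    let Tt : V × V → g × g := fun u => (T u.1, 𝒯 u.1 + T u.2)
    let Tt' : V × V → g × g := fun u => (T u.1, 𝒯' u.1 + T u.2)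
    let φ : g × g → g × g := fun r => (r.1, r.2 + N r.1 + ⁅x₀, r.1⁆)
    let ψ : V × V → V × V := fun m => (m.1, m.2 + S m.1 + ρ x₀ m.1)
    -- `φ` is a Lie algebra homomorphism from the primed deformation to the unprimed one
    (∀ p q : g × g, φ (brt' p q) = brt (φ p) (φ q)) →
    -- `ψ` intertwines the deformed representations
    (∀ (p : g × g) (m : V × V), ψ (ρt' p m) = ρt (φ p) (ψ m)) →
    -- `(φ, ψ)` intertwines the deformed embedding tensors
    (∀ m : V × V, Tt (ψ m) = φ (Tt' m)) →
    ((∀ x y : g, ω' x y - ω x y = ⁅x, N y⁆ - ⁅y, N x⁆ - N ⁅x, y⁆) ∧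
     (∀ (y : g) (u : V), ϱ' y u - ϱ y u = ρ (N y) u + ρ y (S u) - S (ρ y u)) ∧
     (∀ u : V, 𝒯' u - 𝒯 u = T (ρ x₀ u) - ⁅x₀, T u⁆ - N (T u) + T (S u))) := by
  intro brt brt' ρt ρt' Tt Tt' φ ψ hφ hψ hTt
  refine ⟨?_, ?_, ?_⟩
  · intro x y
    have h := congrArg Prod.snd (hφ (x, 0) (y, 0))
    simp only [brt, brt', φ, map_zero, zero_add, add_zero, lie_zero, zero_lie,
      map_add, lie_add, add_lie] at h
    rw [(lie_skew (N x) y).symm,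
      show (⁅(⁅x₀, x⁆ : g), y⁆ : g) = ⁅x₀, ⁅x, y⁆⁆ - ⁅x, ⁅x₀, y⁆⁆ from lie_lie x₀ x y] at h
    rw [← sub_eq_zero] at h ⊢
    rw [← h]; abel
  · intro x u
    have h := congrArg Prod.snd (hψ (x, 0) (u, 0))
    simp only [ρt, ρt', φ, ψ, map_zero, zero_add, add_zero, map_add,
      LieHom.map_lie, Ring.lie_def, LinearMap.sub_apply, Module.End.mul_apply,
      LinearMap.add_apply, LinearMap.zero_apply] at h
    rw [← sub_eq_zero] at h ⊢
    rw [← h]; abel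
  · intro u
    have h := congrArg Prod.snd (hTt (u, 0))
    simp only [Tt, Tt', φ, ψ, map_zero, zero_add, add_zero, map_add] at h
    rw [← sub_eq_zero] at h ⊢
    rw [← neg_eq_zero] at h
    rw [← h]; abel
end

section
/- Let (g,[·,·]_g) be a Lie algebra over a field K, ρ: g → gl(V) a representation, T: V → g an embedding tensor, 𝔗: W → 𝔥 a linear map between vector spaces, φ = (φ_𝔥, φ_W): g → gl(𝔥) × gl(W) a Lie algebra homomorphism with φ_𝔥(x)∘𝔗 = 𝔗∘φ_W(x) for all x ∈ g, and φ: V → Hom(𝔥,W) a linear map such that for all x ∈ g, u ∈ V: φ_𝔥(Tu) = 𝔗∘φ(u), φ_W(Tu) = φ(u)∘𝔗, and φ(ρ(x)u) = φ_W(x)∘φ(u) − φ(u)∘φ_𝔥(x) (i.e. (W→𝔥, φ, φ) is a representation of the Lie-Leibniz triple). Then: (1) [x+α, y+β] := [x,y]_g + φ_𝔥(x)β − φ_𝔥(y)α is a Lie bracket on g ⊕ 𝔥; (2) (ρ+φ_W+φ)(x+α)(u+ξ) := ρ(x)u + φ_W(x)ξ − φ(u)α is a representation of (g ⊕ 𝔥,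 [·,·]) on V ⊕ W; (3) (T+𝔗)(u+ξ) := Tu + 𝔗ξ is an embedding tensor on this LieRep pair. -/
attribute [local instance 100] LieRing.ofAssociativeRing

/-- The semidirect product of a Lie-Leibniz triple `(g, V, T)` with a representation
`(W → H, φ, φv)` is again a Lie-Leibniz triple. -/
theorem semidirect_product_lieLeibniz_triple
    (K g V H W : Type*) [Field K] [LieRing g] [LieAlgebra K g]
    [AddCommGroup V] [Module K V] [AddCommGroup H] [Module K H]
    [AddCommGroup W] [Module K W]
    (ρ : g →ₗ⁅K⁆ Module.End K V) (T : V →ₗ[K] g)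
    (hT : ∀ u v : V, ⁅T u, T v⁆ = T (ρ (T u) v))
    (𝔗 : W →ₗ[K] H)
    (φH : g →ₗ⁅K⁆ Module.End K H) (φW : g →ₗ⁅K⁆ Module.End K W)
    (hcompat : ∀ x : g, (φH x) ∘ₗ 𝔗 = 𝔗 ∘ₗ (φW x))
    (φv : V →ₗ[K] H →ₗ[K] W)
    (hrep1 : ∀ u : V, φH (T u) = 𝔗 ∘ₗ (φv u))
    (hrep2 : ∀ u : V, φW (T u) = (φv u) ∘ₗ 𝔗)
    (hrep3 : ∀ (x : g) (u : V), φv (ρ x u) = (φW x) ∘ₗ (φv u) - (φv u) ∘ₗ (φH x)) :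
    let br : g × H → g × H → g × H :=
      fun p q => (⁅p.1, q.1⁆, φH p.1 q.2 - φH q.1 p.2)
    let rep : g × H → V × W → V × W :=
      fun p m => (ρ p.1 m.1, φW p.1 m.2 - φv m.1 p.2)
    let Tsd : V × W → g × H := fun m => (T m.1, 𝔗 m.2)
    -- (1) `br` is a Lie bracket on `g ⊕ H`
    ((∀ p q : g × H, br p q = -br q p) ∧
     (∀ p q r : g × H, br (br p q) r + br (br q r) p + br (br r p) q = 0) ∧
     -- (2) `rep` is a representation of `(g ⊕ H, br)` on `V ⊕ W`
     (∀ (p q : g × H) (m : V × W), rep (br p q) m = rep p (rep q m) - rep q (rep p m)) ∧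
     -- (3) `T + 𝔗` is an embedding tensor on this LieRep pair
     (∀ m n : V × W, br (Tsd m) (Tsd n) = Tsd (rep (Tsd m) n))) := by
  intro br rep Tsd
  refine ⟨?_, ?_, ?_, ?_⟩
  · intro p q
    simp only [br, Prod.neg_mk, Prod.mk.injEq]
    constructor
    · exact (lie_skew p.1 q.1).symm ▸ rfl
    · abel
  · intro p q r
    simp only [br, Prod.mk_add_mk, Prod.mk_eq_zero]
    constructor
    · rw [← lie_skew ⁅p.1, q.1⁆ r.1, ← lie_skew ⁅q.1, r.1⁆ p.1, ← lie_skew ⁅r.1, p.1⁆ q.1]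
      have := lie_jacobi r.1 p.1 q.1
      have h2 : (-1 : ℤ) • (⁅r.1, ⁅p.1, q.1⁆⁆ + ⁅p.1, ⁅q.1, r.1⁆⁆ + ⁅q.1, ⁅r.1, p.1⁆⁆) = 0 := by
        rw [this]; simp
      rw [← h2]; abel
    · have h1 := φH.map_lie p.1 q.1
      have h2 := φH.map_lie q.1 r.1
      have h3 := φH.map_lie r.1 p.1
      simp only [Ring.lie_def] at h1 h2 h3
      simp only [h1, h2, h3, LinearMap.sub_apply, Module.End.mul_apply, map_sub]
      abel
  · intro p q m
    simp only [rep, br, Prod.mk_sub_mk, Prod.mk.injEq]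
    have h1 := ρ.map_lie p.1 q.1
    have h2 := φW.map_lie p.1 q.1
    simp only [Ring.lie_def] at h1 h2
    have h3 := hrep3 q.1 m.1
    have h4 := hrep3 p.1 m.1
    constructor
    · simp [h1, Module.End.mul_apply]
    · have e3 := congrArg (fun f => f p.2) h3
      have e4 := congrArg (fun f => f q.2) h4
      simp only [LinearMap.sub_apply, LinearMap.comp_apply] at e3 e4
      simp only [h2, LinearMap.sub_apply, Module.End.mul_apply, map_sub, e3, e4]
      abel
  · intro m n
    simp only [br, rep, Tsd, Prod.mk.injEq]
    refine ⟨hT m.1 n.1, ?_⟩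
    have e1 := congrArg (fun f => f (𝔗 n.2)) (hrep1 m.1)
    have e1' := congrArg (fun f => f (𝔗 m.2)) (hrep1 n.1)
    have e2 := congrArg (fun f => f n.2) (hrep2 m.1)
    simp only [LinearMap.comp_apply] at e1 e1' e2
    rw [map_sub, e2, ← e1, ← e1']
end

section
/- Let (g,[·,·]_g, ρ, T) and (ĝ,[·,·]_ĝ, ρ̂, T̂) be Lie-Leibniz triples over a field K, 𝔭: ĝ → g a surjective Lie algebra homomorphism with kernel 𝔥, p: V̂ → V a surjective linear map with kernel W, satisfying T∘p = 𝔭∘T̂ and p(ρ̂(x̂)û) = ρ(𝔭(x̂))(p(û)) for all x̂ ∈ ĝ, û ∈ V̂, and suppose the extension is central: [α, x̂]_ĝ = 0 for all α ∈ 𝔥, x̂ ∈ ĝ; ρ̂(x̂)ξ = 0 for all x̂ ∈ ĝ, ξ ∈ W; ρ̂(α)û = 0 for all α ∈ 𝔥, û ∈ V̂. Let 𝔰: g → ĝ and s: V → V̂ be linear sections (𝔭∘𝔰 = id, p∘s = id), and define ω(x,y) = [𝔰x,𝔰y]_ĝ − 𝔰[x,y]_g, ϖ(x,u) = ρ̂(𝔰x)(su)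 − s(ρ(x)u), 𝒯(u) = T̂(su) − 𝔰(Tu). Then: (1) ω takes values in 𝔥, ϖ takes values in W, 𝒯 takes values in 𝔥, and T̂(W) ⊆ 𝔥; (2) ω([x,y]_g,z) + ω([y,z]_g,x) + ω([z,x]_g,y) = 0 for all x,y,z ∈ g; (3) ϖ([x,y]_g,u) + ϖ(y,ρ(x)u) − ϖ(x,ρ(y)u) = 0 for all x,y ∈ g, u ∈ V; (4) ω(Tu,Tv) − T̂(ϖ(Tu,v)) − 𝒯(ρ(Tu)v) = 0 for all u,v ∈ V. -/
attribute [local instance 100] LieRing.ofAssociativeRing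

/-- For a central extension of a Lie-Leibniz triple `(g, V, T)` and linear sections
`(𝔰, s)`, the data `ω(x,y) = [𝔰x, 𝔰y] − 𝔰[x,y]`, `ϖ(x,u) = ρ̂(𝔰x)(su) − s(ρ(x)u)`,
`𝒯(u) = T̂(su) − 𝔰(Tu)` take values in the kernels and form a 2-cocycle with trivial
coefficients. -/
theorem central_extension_section_two_cocycle
    (K g ghat V Vhat : Type*) [Field K]
    [LieRing g] [LieAlgebra K g] [LieRing ghat] [LieAlgebra K ghat]
    [AddCommGroup V] [Module K V] [AddCommGroup Vhat] [Module K Vhat]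
    (ρ : g →ₗ⁅K⁆ Module.End K V) (T : V →ₗ[K] g)
    (hT : ∀ u v : V, ⁅T u, T v⁆ = T (ρ (T u) v))
    (ρh : ghat →ₗ⁅K⁆ Module.End K Vhat) (Th : Vhat →ₗ[K] ghat)
    (hTh : ∀ u v : Vhat, ⁅Th u, Th v⁆ = Th (ρh (Th u) v))
    (𝔭 : ghat →ₗ⁅K⁆ g) (hpsurj : Function.Surjective 𝔭)
    (p : Vhat →ₗ[K] V) (hpVsurj : Function.Surjective p)
    (hcom1 : ∀ uh : Vhat, T (p uh) = 𝔭 (Th uh))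
    (hcom2 : ∀ (xh : ghat) (uh : Vhat), p (ρh xh uh) = ρ (𝔭 xh) (p uh))
    -- centrality
    (hcen1 : ∀ α xh : ghat, 𝔭 α = 0 → ⁅α, xh⁆ = 0)
    (hcen2 : ∀ (xh : ghat) (ξ : Vhat), p ξ = 0 → ρh xh ξ = 0)
    (hcen3 : ∀ (α : ghat) (uh : Vhat), 𝔭 α = 0 → ρh α uh = 0)
    -- sections
    (𝔰 : g →ₗ[K] ghat) (h𝔰 : ∀ x : g, 𝔭 (𝔰 x) = x)
    (s : V →ₗ[K] Vhat) (hs : ∀ u : V, p (s u) = u) :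
    let ω : g → g → ghat := fun x y => ⁅𝔰 x, 𝔰 y⁆ - 𝔰 ⁅x, y⁆
    let ϖ : g → V → Vhat := fun x u => ρh (𝔰 x) (s u) - s (ρ x u)
    let 𝒯 : V → ghat := fun u => Th (s u) - 𝔰 (T u)
    -- (1) values in the kernels
    ((∀ x y : g, 𝔭 (ω x y) = 0) ∧ (∀ (x : g) (u : V), p (ϖ x u) = 0) ∧
     (∀ u : V, 𝔭 (𝒯 u) = 0) ∧ (∀ ξ : Vhat, p ξ = 0 → 𝔭 (Th ξ) = 0)) ∧
    -- (2)
    (∀ x y z : g, ω ⁅x, y⁆ z + ω ⁅y, z⁆ x + ω ⁅z, x⁆ y = 0) ∧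
    -- (3)
    (∀ (x y : g) (u : V), ϖ ⁅x, y⁆ u + ϖ y (ρ x u) - ϖ x (ρ y u) = 0) ∧
    -- (4)
    (∀ u v : V, ω (T u) (T v) - Th (ϖ (T u) v) - 𝒯 (ρ (T u) v) = 0) := by

  intro ω ϖ 𝒯
  have hωker : ∀ x y : g, 𝔭 (⁅𝔰 x, 𝔰 y⁆ - 𝔰 ⁅x, y⁆) = 0 := by
    intro x y
    simp [LieHom.map_lie, h𝔰]
  have hϖker : ∀ (x : g) (u : V), p (ρh (𝔰 x) (s u) - s (ρ x u)) = 0 := by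
    intro x u
    simp [hcom2, h𝔰, hs]
  have h𝒯ker : ∀ u : V, 𝔭 (Th (s u) - 𝔰 (T u)) = 0 := by
    intro u
    simp [← hcom1, hs, h𝔰]
  refine ⟨⟨hωker, hϖker, h𝒯ker, ?_⟩, ?_, ?_, ?_⟩
  · intro ξ hξ
    rw [← hcom1, hξ, map_zero]
  · -- (2)
    intro x y z
    have key : ∀ a b c : g, ⁅𝔰 ⁅a, b⁆, 𝔰 c⁆ = ⁅⁅𝔰 a, 𝔰 b⁆, 𝔰 c⁆ := by
      intro a b c
      have h1 : 𝔰 ⁅a, b⁆ = ⁅𝔰 a, 𝔰 b⁆ - (⁅𝔰 a, 𝔰 b⁆ - 𝔰 ⁅a, b⁆) := by abel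
      rw [h1, sub_lie, hcen1 _ _ (hωker a b), sub_zero]
    show (⁅𝔰 ⁅x, y⁆, 𝔰 z⁆ - 𝔰 ⁅⁅x, y⁆, z⁆) + (⁅𝔰 ⁅y, z⁆, 𝔰 x⁆ - 𝔰 ⁅⁅y, z⁆, x⁆)
        + (⁅𝔰 ⁅z, x⁆, 𝔰 y⁆ - 𝔰 ⁅⁅z, x⁆, y⁆) = 0
    rw [key, key, key]
    have hjac : ⁅⁅x, y⁆, z⁆ + ⁅⁅y, z⁆, x⁆ + ⁅⁅z, x⁆, y⁆ = (0 : g) := by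
      have := lie_jacobi z x y
      simp only [← lie_skew ⁅x, y⁆ z, ← lie_skew ⁅y, z⁆ x, ← lie_skew ⁅z, x⁆ y] at this ⊢
      linear_combination (norm := abel) -this
    have hjach : ⁅⁅𝔰 x, 𝔰 y⁆, 𝔰 z⁆ + ⁅⁅𝔰 y, 𝔰 z⁆, 𝔰 x⁆ + ⁅⁅𝔰 z, 𝔰 x⁆, 𝔰 y⁆ = (0 : ghat) := by
      have := lie_jacobi (𝔰 z) (𝔰 x) (𝔰 y)
      simp only [← lie_skew ⁅𝔰 x, 𝔰 y⁆ (𝔰 z), ← lie_skew ⁅𝔰 y, 𝔰 z⁆ (𝔰 x),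
        ← lie_skew ⁅𝔰 z, 𝔰 x⁆ (𝔰 y)] at this ⊢
      linear_combination (norm := abel) -this
    have h𝔰jac : 𝔰 ⁅⁅x, y⁆, z⁆ + 𝔰 ⁅⁅y, z⁆, x⁆ + 𝔰 ⁅⁅z, x⁆, y⁆ = 0 := by
      rw [← map_add, ← map_add, hjac, map_zero]
    calc (⁅⁅𝔰 x, 𝔰 y⁆, 𝔰 z⁆ - 𝔰 ⁅⁅x, y⁆, z⁆) + (⁅⁅𝔰 y, 𝔰 z⁆, 𝔰 x⁆ - 𝔰 ⁅⁅y, z⁆, x⁆)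
        + (⁅⁅𝔰 z, 𝔰 x⁆, 𝔰 y⁆ - 𝔰 ⁅⁅z, x⁆, y⁆)
        = (⁅⁅𝔰 x, 𝔰 y⁆, 𝔰 z⁆ + ⁅⁅𝔰 y, 𝔰 z⁆, 𝔰 x⁆ + ⁅⁅𝔰 z, 𝔰 x⁆, 𝔰 y⁆)
          - (𝔰 ⁅⁅x, y⁆, z⁆ + 𝔰 ⁅⁅y, z⁆, x⁆ + 𝔰 ⁅⁅z, x⁆, y⁆) := by abel
      _ = 0 := by rw [hjach, h𝔰jac]; simp
  · -- (3)
    intro x y u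
    show (ρh (𝔰 ⁅x, y⁆) (s u) - s (ρ ⁅x, y⁆ u)) + (ρh (𝔰 y) (s (ρ x u)) - s (ρ y (ρ x u)))
        - (ρh (𝔰 x) (s (ρ y u)) - s (ρ x (ρ y u))) = 0
    have e1 : ρh (𝔰 ⁅x, y⁆) (s u)
        = ρh (𝔰 x) (ρh (𝔰 y) (s u)) - ρh (𝔰 y) (ρh (𝔰 x) (s u)) := by
      have h1 : 𝔰 ⁅x, y⁆ = ⁅𝔰 x, 𝔰 y⁆ - (⁅𝔰 x, 𝔰 y⁆ - 𝔰 ⁅x, y⁆) := by abel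
      rw [h1, map_sub ρh, LinearMap.sub_apply, hcen3 _ _ (hωker x y), sub_zero,
        LieHom.map_lie, Ring.lie_def, LinearMap.sub_apply]
      rfl
    have e2 : ρh (𝔰 y) (s (ρ x u)) = ρh (𝔰 y) (ρh (𝔰 x) (s u)) := by
      have h1 : s (ρ x u) = ρh (𝔰 x) (s u) - (ρh (𝔰 x) (s u) - s (ρ x u)) := by abel
      rw [h1, map_sub, hcen2 _ _ (hϖker x u), sub_zero]
    have e3 : ρh (𝔰 x) (s (ρ y u)) = ρh (𝔰 x) (ρh (𝔰 y) (s u)) := by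
      have h1 : s (ρ y u) = ρh (𝔰 y) (s u) - (ρh (𝔰 y) (s u) - s (ρ y u)) := by abel
      rw [h1, map_sub, hcen2 _ _ (hϖker y u), sub_zero]
    have e4 : ρ ⁅x, y⁆ u = ρ x (ρ y u) - ρ y (ρ x u) := by
      rw [LieHom.map_lie, Ring.lie_def, LinearMap.sub_apply]
      rfl
    rw [e1, e2, e3, e4, map_sub]
    abel
  · -- (4)
    intro u v
    show (⁅𝔰 (T u), 𝔰 (T v)⁆ - 𝔰 ⁅T u, T v⁆) - Th (ρh (𝔰 (T u)) (s v) - s (ρ (T u) v))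
        - (Th (s (ρ (T u) v)) - 𝔰 (T (ρ (T u) v))) = 0
    have e1 : ⁅𝔰 (T u), 𝔰 (T v)⁆ = ⁅Th (s u), Th (s v)⁆ := by
      have h1 : 𝔰 (T u) = Th (s u) - (Th (s u) - 𝔰 (T u)) := by abel
      have h2 : 𝔰 (T v) = Th (s v) - (Th (s v) - 𝔰 (T v)) := by abel
      have hB : ⁅Th (s u), Th (s v) - 𝔰 (T v)⁆ = 0 := by
        rw [← lie_skew, hcen1 _ _ (h𝒯ker v), neg_zero]
      rw [h1, h2, sub_lie, lie_sub, hcen1 _ _ (h𝒯ker u), hB, sub_zero, sub_zero]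
    have e2 : ρh (𝔰 (T u)) (s v) = ρh (Th (s u)) (s v) := by
      have h1 : 𝔰 (T u) = Th (s u) - (Th (s u) - 𝔰 (T u)) := by abel
      rw [h1, map_sub ρh, LinearMap.sub_apply, hcen3 _ _ (h𝒯ker u), sub_zero]
    rw [e1, e2, hTh, hT, map_sub]
    abel
end

section
/- In the setting of a central extension of a Lie-Leibniz triple (g,V,T) by (𝔥,W) with two pairs of linear sections (𝔰,s) and (𝔰',s') of (𝔭,p), set N = 𝔰' − 𝔰 (which takes values in 𝔥) and S = s' − s (which takes values in W), and let (ω,ϖ,𝒯) and (ω',ϖ',𝒯') be the associated 2-cocycles (ω(x,y) = [𝔰x,𝔰y]_ĝ − 𝔰[x,y]_g, ϖ(x,u) = ρ̂(𝔰x)(su) − s(ρ(x)u), 𝒯(u) = T̂(su) − 𝔰(Tu), and similarly with primes). Then for all x,y ∈ g, u ∈ V: ω'(x,y) − ω(x,y) = −N([x,y]_g); ϖ'(x,u) − ϖ(x,u) = −S(ρ(x)u); and 𝒯'(u) − 𝒯(u) = T̂(Su) − N(Tu). Hence the two cocycles differ by a coboundary and define the same cohomology class. -/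
attribute [local instance 100] LieRing.ofAssociativeRing

/-- For a central extension of a Lie-Leibniz triple `(g, V, T)` by `(𝔥, W)` with two
pairs of sections `(𝔰, s)` and `(𝔰', s')`, the difference of the associated
2-cocycles is the coboundary of `(N, S) = (𝔰' − 𝔰, s' − s)`, which takes values in
the kernels. -/
theorem central_extension_cocycles_differ_by_coboundary
    (K g ghat V Vhat : Type*) [Field K]
    [LieRing g] [LieAlgebra K g] [LieRing ghat] [LieAlgebra K ghat]
    [AddCommGroup V] [Module K V] [AddCommGroup Vhat] [Module K Vhat]
    (ρ : g →ₗ⁅K⁆ Module.End K V) (T : V →ₗ[K] g)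
    (hT : ∀ u v : V, ⁅T u, T v⁆ = T (ρ (T u) v))
    (ρh : ghat →ₗ⁅K⁆ Module.End K Vhat) (Th : Vhat →ₗ[K] ghat)
    (hTh : ∀ u v : Vhat, ⁅Th u, Th v⁆ = Th (ρh (Th u) v))
    (𝔭 : ghat →ₗ⁅K⁆ g) (hpsurj : Function.Surjective 𝔭)
    (p : Vhat →ₗ[K] V) (hpVsurj : Function.Surjective p)
    (hcom1 : ∀ uh : Vhat, T (p uh) = 𝔭 (Th uh))
    (hcom2 : ∀ (xh : ghat) (uh : Vhat), p (ρh xh uh) = ρ (𝔭 xh) (p uh))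
    -- centrality
    (hcen1 : ∀ α xh : ghat, 𝔭 α = 0 → ⁅α, xh⁆ = 0)
    (hcen2 : ∀ (xh : ghat) (ξ : Vhat), p ξ = 0 → ρh xh ξ = 0)
    (hcen3 : ∀ (α : ghat) (uh : Vhat), 𝔭 α = 0 → ρh α uh = 0)
    -- two pairs of sections
    (𝔰 𝔰' : g →ₗ[K] ghat) (h𝔰 : ∀ x : g, 𝔭 (𝔰 x) = x) (h𝔰' : ∀ x : g, 𝔭 (𝔰' x) = x)
    (s s' : V →ₗ[K] Vhat) (hs : ∀ u : V, p (s u) = u) (hs' : ∀ u : V, p (s' u) = u) :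
    let N : g →ₗ[K] ghat := 𝔰' - 𝔰
    let S : V →ₗ[K] Vhat := s' - s
    let ω : g → g → ghat := fun x y => ⁅𝔰 x, 𝔰 y⁆ - 𝔰 ⁅x, y⁆
    let ω' : g → g → ghat := fun x y => ⁅𝔰' x, 𝔰' y⁆ - 𝔰' ⁅x, y⁆
    let ϖ : g → V → Vhat := fun x u => ρh (𝔰 x) (s u) - s (ρ x u)
    let ϖ' : g → V → Vhat := fun x u => ρh (𝔰' x) (s' u) - s' (ρ x u)
    let 𝒯 : V → ghat := fun u => Th (s u) - 𝔰 (T u)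
    let 𝒯' : V → ghat := fun u => Th (s' u) - 𝔰' (T u)
    -- `N` and `S` take values in `𝔥 = ker 𝔭` and `W = ker p`
    ((∀ x : g, 𝔭 (N x) = 0) ∧ (∀ u : V, p (S u) = 0)) ∧
    -- the two cocycles differ by the coboundary of `(N, S)`
    ((∀ x y : g, ω' x y - ω x y = -N ⁅x, y⁆) ∧
     (∀ (x : g) (u : V), ϖ' x u - ϖ x u = -S (ρ x u)) ∧
     (∀ u : V, 𝒯' u - 𝒯 u = Th (S u) - N (T u))) := by
  intro N S ω ω' ϖ ϖ' 𝒯 𝒯'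
  have hN : ∀ x : g, 𝔭 (N x) = 0 := by
    intro x; simp only [N, LinearMap.sub_apply]; rw [map_sub, h𝔰, h𝔰', sub_self]
  have hS : ∀ u : V, p (S u) = 0 := by
    intro u; simp only [S, LinearMap.sub_apply]; rw [map_sub, hs, hs', sub_self]
  have h𝔰'eq : ∀ x : g, 𝔰' x = 𝔰 x + N x := by intro x; simp only [N, LinearMap.sub_apply]; abel
  have hs'eq : ∀ u : V, s' u = s u + S u := by intro u; simp only [S, LinearMap.sub_apply]; abel
  refine ⟨⟨hN, hS⟩, ?_, ?_, ?_⟩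
  · intro x y
    have h1 : ⁅𝔰' x, 𝔰' y⁆ = ⁅𝔰 x, 𝔰 y⁆ := by
      rw [h𝔰'eq x, h𝔰'eq y, add_lie, lie_add, lie_add,
        hcen1 (N x) (𝔰 y) (hN x), hcen1 (N x) (N y) (hN x),
        ← lie_skew (𝔰 x) (N y), hcen1 (N y) (𝔰 x) (hN y)]
      abel
    simp only [ω, ω', h1, h𝔰'eq ⁅x, y⁆]
    abel
  · intro x u
    have h1 : ρh (𝔰' x) (s' u) = ρh (𝔰 x) (s u) := by
      rw [h𝔰'eq x, hs'eq u, map_add]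
      simp only [LinearMap.add_apply, map_add,
        hcen3 (N x) _ (hN x), hcen2 (𝔰 x) (S u) (hS u)]
      abel
    simp only [ϖ, ϖ', h1, hs'eq (ρ x u)]
    abel
  · intro u
    simp only [𝒯, 𝒯', hs'eq u, h𝔰'eq (T u), map_add]
    abel
end
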